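/- (Instrument relevance preservation.) Let (Ω, 𝓕, μ) be a probability space, T_rct, T_synth, Z : Ω → Bool measurable. Suppose T_rct is independent of the pair ω ↦ (T_synth ω, Z ω) under μ and μ({ω | T_rct ω = true}) = 1/2. Let A = {ω | T_rct ω = T_synth ω}, and write z ω = if Z ω then (1:ℝ) else 0 and t ω = if T_synth ω then (1:ℝ) else 0. Then the covariance of Z and T_synth is preserved under conditioning on acceptance: ∫ z·t d(ProbabilityTheory.cond μ A) − (∫ z d(ProbabilityTheory.cond μ A)) · (∫ t d(ProbabilityTheory.cond μ A)) = ∫ z·t dμ − (∫ z dμ)(∫ t dμ). In particular, if the covariance of Z and T_synth under μ is nonzero, it is nonzero under ProbabilityTheory.cond μ A. -/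
import Mathlib


open MeasureTheory ProbabilityTheory

theorem instrument_relevance_preservation {Ω : Type*} [MeasurableSpace Ω]
    (μ : Measure Ω) [IsProbabilityMeasure μ]
    (Trct Tsynth Z : Ω → Bool)
    (hTrct : Measurable Trct) (hTsynth : Measurable Tsynth) (hZ : Measurable Z)
    (hindep : IndepFun Trct (fun ω => (Tsynth ω, Z ω)) μ)
    (hbal : μ {ω | Trct ω = true} = 1/2) :
    ((∫ ω, (if Z ω then (1:ℝ) else 0) * (if Tsynth ω then (1:ℝ) else 0)
        ∂(ProbabilityTheory.cond μ {ω | Trct ω = Tsynth ω}))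
      - (∫ ω, (if Z ω then (1:ℝ) else 0)
          ∂(ProbabilityTheory.cond μ {ω | Trct ω = Tsynth ω}))
        * (∫ ω, (if Tsynth ω then (1:ℝ) else 0)
          ∂(ProbabilityTheory.cond μ {ω | Trct ω = Tsynth ω}))
      = (∫ ω, (if Z ω then (1:ℝ) else 0) * (if Tsynth ω then (1:ℝ) else 0) ∂μ)
        - (∫ ω, (if Z ω then (1:ℝ) else 0) ∂μ)
          * (∫ ω, (if Tsynth ω then (1:ℝ) else 0) ∂μ))
    ∧ ((∫ ω, (if Z ω then (1:ℝ) else 0) * (if Tsynth ω then (1:ℝ) else 0) ∂μ)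
        - (∫ ω, (if Z ω then (1:ℝ) else 0) ∂μ)
          * (∫ ω, (if Tsynth ω then (1:ℝ) else 0) ∂μ) ≠ 0 →
      (∫ ω, (if Z ω then (1:ℝ) else 0) * (if Tsynth ω then (1:ℝ) else 0)
          ∂(ProbabilityTheory.cond μ {ω | Trct ω = Tsynth ω}))
        - (∫ ω, (if Z ω then (1:ℝ) else 0)
            ∂(ProbabilityTheory.cond μ {ω | Trct ω = Tsynth ω}))
          * (∫ ω, (if Tsynth ω then (1:ℝ) else 0)
            ∂(ProbabilityTheory.cond μ {ω | Trct ω = Tsynth ω})) ≠ 0) := by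
  set A : Set Ω := {ω | Trct ω = Tsynth ω} with hAdef
  set pair : Ω → Bool × Bool := fun ω => (Tsynth ω, Z ω) with hpairdef
  have hpair : Measurable pair := hTsynth.prodMk hZ
  have hA : MeasurableSet A := by
    have : A = (fun ω => (Trct ω, Tsynth ω)) ⁻¹' {p : Bool × Bool | p.1 = p.2} := rfl
    rw [this]
    exact (hTrct.prodMk hTsynth) ((Set.to_countable _).measurableSet)
  have hbal' : μ (Trct ⁻¹' {true}) = 1/2 := by
    have : Trct ⁻¹' {true} = {ω | Trct ω = true} := rfl
    rw [this, hbal]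
  have hbalf : μ (Trct ⁻¹' {false}) = 1/2 := by
    have hc : Trct ⁻¹' {false} = (Trct ⁻¹' {true})ᶜ := by
      ext ω
      simp only [Set.mem_preimage, Set.mem_singleton_iff, Set.mem_compl_iff]
      cases h : Trct ω <;> simp [h]
    rw [hc, measure_compl (hTrct (measurableSet_singleton _)) (measure_ne_top μ _), hbal',
      measure_univ]
    have : (1 : ENNReal) - 1 / 2 = 1 / 2 := ENNReal.sub_half ENNReal.one_ne_top
    exact this
  have hkey : ∀ S : Set (Bool × Bool), μ (A ∩ pair ⁻¹' S) = (1/2) * μ (pair ⁻¹' S) := by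
    intro S
    have hdecomp : A ∩ pair ⁻¹' S =
        (Trct ⁻¹' {true} ∩ pair ⁻¹' (S ∩ Prod.fst ⁻¹' {true})) ∪
        (Trct ⁻¹' {false} ∩ pair ⁻¹' (S ∩ Prod.fst ⁻¹' {false})) := by
      ext ω
      simp only [Set.mem_inter_iff, Set.mem_union, Set.mem_preimage, Set.mem_singleton_iff,
        Set.mem_setOf_eq, hAdef, hpairdef]
      cases h : Tsynth ω <;> simp [h]
    have hdisj : Disjoint (Trct ⁻¹' {true} ∩ pair ⁻¹' (S ∩ Prod.fst ⁻¹' {true}))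
        (Trct ⁻¹' {false} ∩ pair ⁻¹' (S ∩ Prod.fst ⁻¹' {false})) := by
      apply Set.disjoint_left.mpr
      rintro ω ⟨h1, -⟩ ⟨h2, -⟩
      simp only [Set.mem_preimage, Set.mem_singleton_iff] at h1 h2
      rw [h1] at h2; exact Bool.noConfusion h2
    have hm2 : MeasurableSet (Trct ⁻¹' {false} ∩ pair ⁻¹' (S ∩ Prod.fst ⁻¹' {false})) :=
      (hTrct (measurableSet_singleton _)).inter (hpair ((Set.to_countable _).measurableSet))
    rw [hdecomp, measure_union hdisj hm2,
      hindep.measure_inter_preimage_eq_mul _ _ (measurableSet_singleton _)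
        ((Set.to_countable _).measurableSet),
      hindep.measure_inter_preimage_eq_mul _ _ (measurableSet_singleton _)
        ((Set.to_countable _).measurableSet),
      hbal', hbalf, ← mul_add]
    have hdisj2 : Disjoint (pair ⁻¹' (S ∩ Prod.fst ⁻¹' {true}))
        (pair ⁻¹' (S ∩ Prod.fst ⁻¹' {false})) := by
      apply Set.disjoint_left.mpr
      rintro ω ⟨-, h1⟩ ⟨-, h2⟩
      simp only [Set.mem_preimage, Set.mem_singleton_iff] at h1 h2
      rw [h1] at h2; exact Bool.noConfusion h2
    have hU : (Prod.fst ⁻¹' {true} ∪ Prod.fst ⁻¹' {false} : Set (Bool × Bool)) = Set.univ := by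
      ext p
      cases hp : p.1 <;> simp [Set.mem_preimage, hp]
    have hsplit : pair ⁻¹' S
        = pair ⁻¹' (S ∩ Prod.fst ⁻¹' {true}) ∪ pair ⁻¹' (S ∩ Prod.fst ⁻¹' {false}) := by
      rw [← Set.preimage_union, ← Set.inter_union_distrib_left, hU, Set.inter_univ]
    rw [hsplit, measure_union hdisj2 (hpair ((Set.to_countable _).measurableSet)), mul_add]
  have hAmeas : μ A = 1/2 := by
    have := hkey Set.univ
    simpa [measure_univ] using this
  have hmap : Measure.map pair (ProbabilityTheory.cond μ A) = Measure.map pair μ := by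
    ext S hS
    rw [Measure.map_apply hpair hS, Measure.map_apply hpair hS,
      ProbabilityTheory.cond_apply hA, hkey S, hAmeas, ← mul_assoc,
      ENNReal.inv_mul_cancel (by norm_num) (by norm_num), one_mul]
  have hint : ∀ g : Bool × Bool → ℝ,
      ∫ ω, g (pair ω) ∂(ProbabilityTheory.cond μ A) = ∫ ω, g (pair ω) ∂μ := by
    intro g
    rw [← integral_map hpair.aemeasurable (measurable_of_countable g).aestronglyMeasurable,
      hmap, integral_map hpair.aemeasurable (measurable_of_countable g).aestronglyMeasurable]
  have h1 : ∫ ω, (if Z ω then (1:ℝ) else 0) * (if Tsynth ω then (1:ℝ) else 0)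
      ∂(ProbabilityTheory.cond μ A)
      = ∫ ω, (if Z ω then (1:ℝ) else 0) * (if Tsynth ω then (1:ℝ) else 0) ∂μ :=
    hint (fun p => (if p.2 then (1:ℝ) else 0) * (if p.1 then (1:ℝ) else 0))
  have h2 : ∫ ω, (if Z ω then (1:ℝ) else 0) ∂(ProbabilityTheory.cond μ A)
      = ∫ ω, (if Z ω then (1:ℝ) else 0) ∂μ :=
    hint (fun p => (if p.2 then (1:ℝ) else 0))
  have h3 : ∫ ω, (if Tsynth ω then (1:ℝ) else 0) ∂(ProbabilityTheory.cond μ A)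
      = ∫ ω, (if Tsynth ω then (1:ℝ) else 0) ∂μ :=
    hint (fun p => (if p.1 then (1:ℝ) else 0))
  refine ⟨by rw [h1, h2, h3], fun h => by rw [h1, h2, h3]; exact h⟩
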